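/- Let m ≥ 0, β > 0, γ = (m+2)/2, and let y_λ(t) = y₁(λ^{1/γ} t) be the normalized solution of y'' = λ² t^m y with y_λ(0⁺)=1, y_λ(∞)=0, satisfying the lower bound y_λ(t) ≥ C₁⁻¹ (λ^{1/γ} t)^{−m/4} exp(−γ⁻¹ λ t^γ) whenever λ t^γ ≥ T₀ (for some T₀ ≥ 1, C₁ > 1 depending on m). Define W_β(x,t) := ∫₀¹ y_λ(t) φ_λ(x) λ^{β−1} dλ with φ_λ ≥ 1 pointwise. Then there is C = C(m, β) > 0 such that for all t with t^γ > 2T₀ and all x ∈ ℝ^N: W_β(x,t) ≥ C t^{−(m+2)β/2}. -/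

import Mathlib

open MeasureTheory Real

theorem stmt_16 (N : ℕ) (m β γ T₀ C₁ : ℝ) (hm : 0 ≤ m) (hβ : 0 < β)
    (hγ : γ = (m + 2) / 2) (hT₀ : 1 ≤ T₀) (hC₁ : 1 < C₁)
    (y : ℝ → ℝ → ℝ) (φ : ℝ → EuclideanSpace ℝ (Fin N) → ℝ)
    (hypos : ∀ lam t : ℝ, 0 < lam → 0 < t → 0 < y lam t)
    (hφ : ∀ (lam : ℝ) (x : EuclideanSpace ℝ (Fin N)), 1 ≤ φ lam x)
    (hylow : ∀ lam t : ℝ, 0 < lam → 0 < t → T₀ ≤ lam * t ^ γ →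
      C₁⁻¹ * (lam ^ (1 / γ) * t) ^ (-m / 4) * Real.exp (-(γ⁻¹ * lam * t ^ γ)) ≤ y lam t)
    (hint : ∀ (x : EuclideanSpace ℝ (Fin N)) (t : ℝ), 0 < t →
      IntegrableOn (fun lam : ℝ => y lam t * φ lam x * lam ^ (β - 1)) (Set.Ioo (0 : ℝ) 1)) :
    ∃ C > (0 : ℝ), ∀ t > (0 : ℝ), 2 * T₀ < t ^ γ → ∀ x : EuclideanSpace ℝ (Fin N),
      C * t ^ (-((m + 2) * β / 2)) ≤
        ∫ lam in Set.Ioo (0 : ℝ) 1, y lam t * φ lam x * lam ^ (β - 1) := by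
  have hγpos : 0 < γ := by rw [hγ]; linarith
  have hT₀pos : (0:ℝ) < T₀ := lt_of_lt_of_le one_pos hT₀
  have h2T₀pos : (0:ℝ) < 2 * T₀ := by linarith
  set A : ℝ := ((2*T₀) ^ ((1:ℝ)/γ)) ^ (-m/4) with hA
  set E : ℝ := Real.exp (-(γ⁻¹ * (2*T₀))) with hE
  set M : ℝ := min (T₀ ^ (β-1)) ((2*T₀) ^ (β-1)) with hM
  have hApos : 0 < A := Real.rpow_pos_of_pos (Real.rpow_pos_of_pos h2T₀pos _) _
  have hEpos : 0 < E := Real.exp_pos _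
  have hMpos : 0 < M :=
    lt_min (Real.rpow_pos_of_pos hT₀pos _) (Real.rpow_pos_of_pos h2T₀pos _)
  have hC₁inv : 0 < C₁⁻¹ := inv_pos.mpr (by linarith)
  refine ⟨C₁⁻¹ * A * E * M * T₀, by positivity, ?_⟩
  intro t ht h2T x
  have htγ : 0 < t ^ γ := Real.rpow_pos_of_pos ht γ
  have htneg : t ^ (-γ) = (t ^ γ)⁻¹ := Real.rpow_neg ht.le γ
  have htnegpos : 0 < t ^ (-γ) := Real.rpow_pos_of_pos ht _
  set a : ℝ := T₀ * t ^ (-γ) with ha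
  set b : ℝ := 2*T₀ * t ^ (-γ) with hb
  have hapos : 0 < a := by positivity
  have hab : a < b := by
    apply mul_lt_mul_of_pos_right _ htnegpos
    linarith
  have hb1 : b ≤ 1 := by
    rw [hb, htneg, ← div_eq_mul_inv]
    exact (div_le_one htγ).mpr h2T.le
  have hsub : Set.Ioo a b ⊆ Set.Ioo (0:ℝ) 1 := fun lam hl =>
    ⟨lt_trans hapos hl.1, lt_of_lt_of_le hl.2 hb1⟩
  -- key pointwise bound
  have key : ∀ lam ∈ Set.Ioo a b,
      C₁⁻¹ * A * E * (M * t ^ (-γ*(β-1))) ≤ y lam t * φ lam x * lam ^ (β-1) := by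
    intro lam hl
    have hlpos : 0 < lam := lt_trans hapos hl.1
    have hlow : T₀ ≤ lam * t ^ γ := by
      have h := hl.1
      rw [ha, htneg, ← div_eq_mul_inv] at h
      exact ((div_lt_iff₀ htγ).mp h).le
    have hup : lam * t ^ γ ≤ 2 * T₀ := by
      have h := hl.2
      rw [hb, htneg, ← div_eq_mul_inv] at h
      exact ((lt_div_iff₀ htγ).mp h).le
    have hlt : 0 < lam * t ^ γ := by positivity
    -- rewrite lam^{1/γ} t = (lam t^γ)^{1/γ}
    have hrw : lam ^ ((1:ℝ)/γ) * t = (lam * t ^ γ) ^ ((1:ℝ)/γ) := by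
      rw [Real.mul_rpow hlpos.le htγ.le, ← Real.rpow_mul ht.le, mul_one_div,
        div_self hγpos.ne', Real.rpow_one]
    have hy := hylow lam t hlpos ht hlow
    rw [hrw] at hy
    -- bound the power factor
    have hfac : A ≤ ((lam * t ^ γ) ^ ((1:ℝ)/γ)) ^ (-m/4) := by
      apply Real.rpow_le_rpow_of_nonpos (Real.rpow_pos_of_pos hlt _)
      · exact Real.rpow_le_rpow hlt.le hup (by positivity)
      · have : 0 ≤ m / 4 := by linarith
        linarith
    have hexp : E ≤ Real.exp (-(γ⁻¹ * lam * t ^ γ)) := by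
      apply Real.exp_le_exp.mpr
      have hγinv : 0 < γ⁻¹ := inv_pos.mpr hγpos
      have : γ⁻¹ * (lam * t ^ γ) ≤ γ⁻¹ * (2 * T₀) :=
        mul_le_mul_of_nonneg_left hup hγinv.le
      rw [mul_assoc]
      linarith
    have hy2 : C₁⁻¹ * A * E ≤ y lam t := by
      refine le_trans ?_ hy
      have h1 : C₁⁻¹ * A ≤ C₁⁻¹ * ((lam * t ^ γ) ^ ((1:ℝ)/γ)) ^ (-m/4) :=
        mul_le_mul_of_nonneg_left hfac hC₁inv.le
      calc C₁⁻¹ * A * E ≤ C₁⁻¹ * ((lam * t ^ γ) ^ ((1:ℝ)/γ)) ^ (-m/4) * E :=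
            mul_le_mul_of_nonneg_right h1 hEpos.le
        _ ≤ _ := mul_le_mul_of_nonneg_left hexp (by positivity)
    -- bound lam^{β-1}
    have hlam : M * t ^ (-γ*(β-1)) ≤ lam ^ (β-1) := by
      have hfact : lam ^ (β-1) = (lam * t ^ γ) ^ (β-1) * t ^ (-γ*(β-1)) := by
        have h1 : (t ^ γ) ^ (β-1) * t ^ (-γ*(β-1)) = 1 := by
          rw [← Real.rpow_mul ht.le, ← Real.rpow_add ht,
            show γ*(β-1) + -γ*(β-1) = 0 by ring, Real.rpow_zero]
        rw [Real.mul_rpow hlpos.le htγ.le, mul_assoc, h1, mul_one]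
      rw [hfact]
      apply mul_le_mul_of_nonneg_right _ (Real.rpow_pos_of_pos ht _).le
      rcases le_or_gt 0 (β - 1) with hβ1 | hβ1
      · exact le_trans (min_le_left _ _) (Real.rpow_le_rpow hT₀pos.le hlow hβ1)
      · exact le_trans (min_le_right _ _)
          (Real.rpow_le_rpow_of_nonpos hlt hup hβ1.le)
    have hyx : C₁⁻¹ * A * E ≤ y lam t * φ lam x := by
      calc C₁⁻¹ * A * E ≤ y lam t := hy2
        _ = y lam t * 1 := (mul_one _).symm
        _ ≤ y lam t * φ lam x :=
            mul_le_mul_of_nonneg_left (hφ lam x) (hypos lam t hlpos ht).le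
    calc C₁⁻¹ * A * E * (M * t ^ (-γ*(β-1)))
        ≤ (y lam t * φ lam x) * (M * t ^ (-γ*(β-1))) :=
          mul_le_mul_of_nonneg_right hyx (by positivity)
      _ ≤ (y lam t * φ lam x) * lam ^ (β-1) := by
          apply mul_le_mul_of_nonneg_left hlam
          have h1 := hypos lam t hlpos ht
          have h2 := hφ lam x
          nlinarith
  -- integrability and positivity on the big set
  have hint1 := hint x t ht
  have hnonneg : (0 : ℝ → ℝ) ≤ᵐ[volume.restrict (Set.Ioo (0:ℝ) 1)]
      fun lam => y lam t * φ lam x * lam ^ (β-1) := by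
    filter_upwards [ae_restrict_mem measurableSet_Ioo] with lam hl
    have h1 := hypos lam t hl.1 ht
    have h2 := hφ lam x
    have h3 : (0:ℝ) < lam ^ (β-1) := Real.rpow_pos_of_pos hl.1 _
    positivity
  have hint2 : IntegrableOn (fun lam : ℝ => y lam t * φ lam x * lam ^ (β-1))
      (Set.Ioo a b) := hint1.mono_set hsub
  have step1 : ∫ lam in Set.Ioo a b, y lam t * φ lam x * lam ^ (β-1) ≤
      ∫ lam in Set.Ioo (0:ℝ) 1, y lam t * φ lam x * lam ^ (β-1) :=
    setIntegral_mono_set hint1 hnonneg (HasSubset.Subset.eventuallyLE hsub)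
  have hvol : (volume (Set.Ioo a b)).toReal = T₀ * t ^ (-γ) := by
    rw [Real.volume_Ioo, ENNReal.toReal_ofReal (by linarith)]
    rw [hb, ha]; ring
  have step2 : C₁⁻¹ * A * E * (M * t ^ (-γ*(β-1))) * (T₀ * t ^ (-γ)) ≤
      ∫ lam in Set.Ioo a b, y lam t * φ lam x * lam ^ (β-1) := by
    rw [← hvol]
    exact setIntegral_ge_of_const_le_real measurableSet_Ioo
      (ne_of_lt (measure_Ioo_lt_top)) key hint2
  refine le_trans (le_of_eq ?_) (le_trans step2 step1)
  have hexp2 : t ^ (-γ*(β-1)) * t ^ (-γ) = t ^ (-((m+2)*β/2)) := by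
    rw [← Real.rpow_add ht]
    congr 1
    rw [hγ]; ring
  calc C₁⁻¹ * A * E * M * T₀ * t ^ (-((m+2)*β/2))
      = C₁⁻¹ * A * E * M * T₀ * (t ^ (-γ*(β-1)) * t ^ (-γ)) := by rw [hexp2]
    _ = C₁⁻¹ * A * E * (M * t ^ (-γ*(β-1))) * (T₀ * t ^ (-γ)) := by ring
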